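/- Let p be a prime with p > 2 and let F be a finite field of cardinality p², equipped with its ZMod p-algebra structure, with algebra map ι : ZMod p → F. For every a ∈ ZMod p there exists a nonzero χ ∈ F with (χ^(p-1) = 1 or χ^(p+1) = 1) such that ι(a) = χ + χ⁻¹. -/

import Mathlib

theorem exists_chi_add_inv_eq (p : ℕ) [Fact p.Prime] (hp : 2 < p)
    (F : Type*) [Field F] [Fintype F] [Algebra (ZMod p) F] (hF : Fintype.card F = p ^ 2)
    (a : ZMod p) :
    ∃ χ : F, χ ≠ 0 ∧ (χ ^ (p - 1) = 1 ∨ χ ^ (p + 1) = 1) ∧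
      algebraMap (ZMod p) F a = χ + χ⁻¹ := by
  have hpp : p.Prime := Fact.out
  have hinj : Function.Injective (algebraMap (ZMod p) F) := (algebraMap (ZMod p) F).injective
  haveI hchar : CharP F p := charP_of_injective_algebraMap hinj p
  have hpodd : Odd p := hpp.odd_of_ne_two (by omega)
  have hring : ringChar F ≠ 2 := by
    rw [ringChar.eq F p]; omega
  set ι := algebraMap (ZMod p) F
  set d : F := ι a ^ 2 - 4 with hd
  -- d is a square in F
  have hsq : IsSquare d := by
    by_cases h0 : d = 0
    · exact h0 ▸ ⟨0, by ring⟩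
    · rw [FiniteField.isSquare_iff hring h0]
      have hda : d = ι (a ^ 2 - 4) := by
        simp only [hd, map_sub, map_pow, map_ofNat]
      have hb0 : (a ^ 2 - 4 : ZMod p) ≠ 0 := by
        intro h; apply h0; rw [hda, h, map_zero]
      have h1 : d ^ (p - 1) = 1 := by
        rw [hda, ← map_pow, ZMod.pow_card_sub_one_eq_one hb0, map_one]
      have hcard : Fintype.card F / 2 = (p - 1) * ((p + 1) / 2) := by
        obtain ⟨k, hk⟩ := hpodd
        have h1 : p ^ 2 = (2 * k ^ 2 + 2 * k) * 2 + 1 := by subst hk; ring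
        have h4 : (p + 1) / 2 = k + 1 := by omega
        have h5 : p - 1 = 2 * k := by omega
        rw [hF, h1, h4, h5]
        have h6 : 2 * k * (k + 1) = 2 * k ^ 2 + 2 * k := by ring
        omega
      rw [hcard, pow_mul, h1, one_pow]
  obtain ⟨s, hs⟩ := hsq
  have h2 : (2 : F) ≠ 0 := by
    intro h
    have hd2 := (CharP.cast_eq_zero_iff F p 2).mp h
    have := Nat.le_of_dvd (by norm_num) hd2
    omega
  set χ : F := (ι a + s) / 2 with hχ
  set χ' : F := (ι a - s) / 2 with hχ'
  have hmul : χ * χ' = 1 := by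
    rw [hχ, hχ']
    field_simp
    have : s * s = ι a ^ 2 - 4 := by rw [← hs, hd]
    ring_nf
    ring_nf at this
    rw [this]; ring
  have hadd : χ + χ' = ι a := by rw [hχ, hχ']; field_simp; ring
  have hχ0 : χ ≠ 0 := by
    intro h; rw [h, zero_mul] at hmul; exact zero_ne_one hmul
  have hinv : χ⁻¹ = χ' := by
    field_simp [hχ0]; rw [mul_comm] at hmul; rw [mul_comm]; exact hmul.symm
  -- χ satisfies X² - ι a X + 1 = 0
  have hroot : χ ^ 2 - ι a * χ + 1 = 0 := by
    rw [← hadd, ← hmul]; ring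
  -- Frobenius: χ^p is also a root
  have hfrob : (χ ^ p) ^ 2 - ι a * χ ^ p + 1 = 0 := by
    have := congrArg (frobenius F p) hroot
    simpa [map_sub, map_add, map_mul, map_pow, map_one, frobenius_def, zero_pow hpp.ne_zero,
      ← map_pow, ZMod.pow_card, mul_comm, mul_pow, ← pow_mul, Nat.mul_comm] using this
  have hcases : χ ^ p = χ ∨ χ ^ p = χ' := by
    have key : (χ ^ p - χ) * (χ ^ p - χ') = 0 := by
      have expand : (χ ^ p - χ) * (χ ^ p - χ') =
          (χ ^ p) ^ 2 - (χ + χ') * χ ^ p + χ * χ' := by ring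
      rw [expand, hadd, hmul]
      exact hfrob
    rcases mul_eq_zero.mp key with h | h
    · exact Or.inl (sub_eq_zero.mp h)
    · exact Or.inr (sub_eq_zero.mp h)
  refine ⟨χ, hχ0, ?_, by rw [hinv]; exact hadd.symm⟩
  rcases hcases with h | h
  · left
    have : χ ^ (p - 1) * χ = χ := by
      rw [← pow_succ]
      have : p - 1 + 1 = p := by omega
      rw [this, h]
    exact mul_right_cancel₀ hχ0 (by rw [this, one_mul])
  · right
    rw [pow_succ, h, ← hinv, inv_mul_cancel₀ hχ0]
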